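/- A current on a connected quiver is conserved if and only if its restriction to each biconnected component is a conserved current on that component. -/

import Mathlib

open Relation

/-- One directed step along an arrow of the quiver. -/
def QStep {V A : Type} (s t : A → V) (i j : V) : Prop := ∃ a : A, s a = i ∧ t a = j

/-- One undirected step along an arrow of the quiver. -/
def UStep {V A : Type} (s t : A → V) (i j : V) : Prop :=
  ∃ a : A, (s a = i ∧ t a = j) ∨ (s a = j ∧ t a = i)

/-- A current is conserved if at each vertex the incoming total equals the outgoing total. -/
def Conserved {V A : Type} [Fintype A] [DecidableEq V] (s t : A → V) (lam : A → ℝ) : Prop :=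
  ∀ i : V, ∑ a ∈ Finset.univ.filter (fun a => t a = i), lam a
         = ∑ a ∈ Finset.univ.filter (fun a => s a = i), lam a

/-- A simple oriented cycle of the quiver: a nonempty cyclically composable list of arrows
whose sources are pairwise distinct. -/
structure SimpleCycle {V A : Type} (s t : A → V) where
  arrows : List A
  nonempty : arrows ≠ []
  chain : ∀ k : ℕ, ∀ h : k < arrows.length,
    t (arrows.get ⟨k, h⟩) =
      s (arrows.get ⟨(k + 1) % arrows.length, Nat.mod_lt _ (List.length_pos_iff.mpr nonempty)⟩)
  simple : (arrows.map s).Nodup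

/-- The set of vertices touched by a set of arrows. -/
def QVerts {V A : Type} (s t : A → V) (B : Set A) : Set V :=
  {v | ∃ a ∈ B, s a = v ∨ t a = v}

/-- One undirected step along an arrow of `B` avoiding the vertex set `X`. -/
def AvoidStep {V A : Type} (s t : A → V) (B : Set A) (X : Set V) (i j : V) : Prop :=
  i ∉ X ∧ j ∉ X ∧ ∃ a ∈ B, (s a = i ∧ t a = j) ∨ (s a = j ∧ t a = i)

/-- The subquiver on the arrow set `B` is connected after removing the vertices of `X`. -/
def ConnAvoid {V A : Type} (s t : A → V) (B : Set A) (X : Set V) : Prop :=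
  ∀ i ∈ QVerts s t B \ X, ∀ j ∈ QVerts s t B \ X,
    Relation.ReflTransGen (AvoidStep s t B X) i j

/-- A nonempty arrow set is biconnected if it stays connected after removing any
single vertex (or none). -/
def IsBiconnQ {V A : Type} (s t : A → V) (B : Set A) : Prop :=
  B.Nonempty ∧ ∀ X : Set V, X.Subsingleton → ConnAvoid s t B X

/-- A biconnected component (block) of the quiver: a maximal biconnected arrow set. -/
def IsBlockQ {V A : Type} (s t : A → V) (B : Set A) : Prop :=
  IsBiconnQ s t B ∧ ∀ B' : Set A, IsBiconnQ s t B' → B ⊆ B' → B' = B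

open scoped Classical in
/-- The restriction of a current to an arrow set `B` is conserved on `B`. -/
def ConservedOn {V A : Type} [Fintype A] (s t : A → V) (B : Set A) (lam : A → ℝ) : Prop :=
  ∀ i : V, ∑ a ∈ Finset.univ.filter (fun a => a ∈ B ∧ t a = i), lam a
         = ∑ a ∈ Finset.univ.filter (fun a => a ∈ B ∧ s a = i), lam a


section Aux
variable {V A : Type} {s t : A → V}

lemma avoidStep_symm {B : Set A} {X : Set V} : Symmetric (AvoidStep s t B X) := by
  rintro i j ⟨hi, hj, a, ha, h⟩
  exact ⟨hj, hi, a, ha, h.symm⟩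

lemma avoidStep_mono {B B' : Set A} {X : Set V} (hBB : B ⊆ B') {i j : V}
    (h : AvoidStep s t B X i j) : AvoidStep s t B' X i j := by
  obtain ⟨hi, hj, a, ha, hh⟩ := h
  exact ⟨hi, hj, a, hBB ha, hh⟩

lemma qverts_union {B B' : Set A} : QVerts s t (B ∪ B') = QVerts s t B ∪ QVerts s t B' := by
  ext v
  constructor
  · rintro ⟨a, ha | ha, h⟩
    · exact Or.inl ⟨a, ha, h⟩
    · exact Or.inr ⟨a, ha, h⟩
  · rintro (⟨a, ha, h⟩ | ⟨a, ha, h⟩)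
    · exact ⟨a, Or.inl ha, h⟩
    · exact ⟨a, Or.inr ha, h⟩

lemma biconn_union {B₁ B₂ : Set A} (h₁ : IsBiconnQ s t B₁) (h₂ : IsBiconnQ s t B₂)
    {u w : V} (huw : u ≠ w)
    (hu₁ : u ∈ QVerts s t B₁) (hu₂ : u ∈ QVerts s t B₂)
    (hw₁ : w ∈ QVerts s t B₁) (hw₂ : w ∈ QVerts s t B₂) :
    IsBiconnQ s t (B₁ ∪ B₂) := by
  refine ⟨h₁.1.mono Set.subset_union_left, ?_⟩
  intro X hX i hi j hj
  -- pick z ∈ {u, w} with z ∉ X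
  obtain ⟨z, hz1, hz2, hzX⟩ : ∃ z, z ∈ QVerts s t B₁ ∧ z ∈ QVerts s t B₂ ∧ z ∉ X := by
    by_cases hu : u ∈ X
    · by_cases hw : w ∈ X
      · exact absurd (hX hu hw) huw
      · exact ⟨w, hw₁, hw₂, hw⟩
    · exact ⟨u, hu₁, hu₂, hu⟩
  have key : ∀ k ∈ QVerts s t (B₁ ∪ B₂) \ X,
      Relation.ReflTransGen (AvoidStep s t (B₁ ∪ B₂) X) k z := by
    rintro k ⟨hk, hkX⟩
    rw [qverts_union] at hk
    rcases hk with hk | hk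
    · exact Relation.ReflTransGen.mono
        (fun _ _ h => avoidStep_mono Set.subset_union_left h) _ _ (h₁.2 X hX k ⟨hk, hkX⟩ z ⟨hz1, hzX⟩)
    · exact Relation.ReflTransGen.mono
        (fun _ _ h => avoidStep_mono Set.subset_union_right h) _ _ (h₂.2 X hX k ⟨hk, hkX⟩ z ⟨hz2, hzX⟩)
  haveI : Std.Symm (AvoidStep s t (B₁ ∪ B₂) X) := ⟨fun _ _ h => avoidStep_symm h⟩
  exact (key i hi).trans (Std.Symm.symm _ _ (key j hj))

lemma singleton_biconn (a : A) : IsBiconnQ s t {a} := by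
  refine ⟨⟨a, rfl⟩, ?_⟩
  intro X hX i hi j hj
  rcases hi with ⟨⟨b, hb, hbv⟩, hiX⟩
  rcases hj with ⟨⟨c, hc, hcv⟩, hjX⟩
  rcases hb; rcases hc
  rcases hbv with hbv | hbv <;> rcases hcv with hcv | hcv
  · rw [← hbv, ← hcv]
  · exact ReflTransGen.single ⟨hiX, hjX, a, rfl, Or.inl ⟨hbv, hcv⟩⟩
  · exact ReflTransGen.single ⟨hiX, hjX, a, rfl, Or.inr ⟨hcv, hbv⟩⟩
  · rw [← hbv, ← hcv]

lemma exists_block [Finite A] (a : A) : ∃ B : Set A, IsBlockQ s t B ∧ a ∈ B := by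
  set 𝒮 : Set (Set A) := {B | IsBiconnQ s t B ∧ a ∈ B} with h𝒮
  have hfin : 𝒮.Finite := Set.toFinite _
  have hne : 𝒮.Nonempty := ⟨{a}, singleton_biconn a, rfl⟩
  obtain ⟨B, hB, hmax⟩ := Set.Finite.exists_maximalFor id 𝒮 hfin hne
  refine ⟨B, ⟨hB.1, ?_⟩, hB.2⟩
  intro B' hB' hBB'
  exact Set.Subset.antisymm (hmax ⟨hB', hBB' hB.2⟩ hBB') hBB'

lemma mem_qverts_s {B : Set A} {a : A} (ha : a ∈ B) : s a ∈ QVerts s t B := ⟨a, ha, Or.inl rfl⟩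
lemma mem_qverts_t {B : Set A} {a : A} (ha : a ∈ B) : t a ∈ QVerts s t B := ⟨a, ha, Or.inr rfl⟩

/-- A non-loop arrow lies in at most one block. -/
lemma block_unique {B₁ B₂ : Set A} (h₁ : IsBlockQ s t B₁) (h₂ : IsBlockQ s t B₂)
    {a : A} (hnl : s a ≠ t a) (ha₁ : a ∈ B₁) (ha₂ : a ∈ B₂) : B₁ = B₂ := by
  have hu := biconn_union h₁.1 h₂.1 hnl (mem_qverts_s ha₁) (mem_qverts_s ha₂)
    (mem_qverts_t ha₁) (mem_qverts_t ha₂)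
  have e₁ := h₁.2 _ hu Set.subset_union_left
  have e₂ := h₂.2 _ hu Set.subset_union_right
  exact e₁.symm.trans e₂
end Aux

section DsumAux
variable {V A : Type} {s t : A → V}
open scoped Classical

/-- Canonical classical sum of `lam` over arrows satisfying `p`. -/
noncomputable def dsum [Fintype A] (lam : A → ℝ) (p : A → Prop) : ℝ :=
  ∑ a : A, if p a then lam a else 0

lemma sum_eq_dsum [Fintype A] (lam : A → ℝ) {p : A → Prop} [DecidablePred p] :
    ∑ a ∈ Finset.univ.filter p, lam a = dsum lam p := by
  rw [Finset.sum_filter]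
  exact Finset.sum_congr rfl fun a _ => by split_ifs <;> rfl

lemma dsum_congr [Fintype A] (lam : A → ℝ) {p q : A → Prop} (h : ∀ a, p a ↔ q a) :
    dsum lam p = dsum lam q :=
  Finset.sum_congr rfl fun a _ => if_congr (h a) rfl rfl

lemma dsum_split [Fintype A] (lam : A → ℝ) (p : A → Prop) (r : A → Prop) :
    dsum lam p = dsum lam (fun a => p a ∧ r a) + dsum lam (fun a => p a ∧ ¬ r a) := by
  unfold dsum
  rw [← Finset.sum_add_distrib]
  exact Finset.sum_congr rfl fun a _ => by by_cases h1 : p a <;> by_cases h2 : r a <;> simp [h1, h2]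

lemma dsum_sub_linear [Fintype A] (lam f : A → ℝ) (c : ℝ) (p : A → Prop) :
    dsum (fun a => lam a - c * f a) p = dsum lam p - c * dsum f p := by
  unfold dsum
  rw [Finset.mul_sum, ← Finset.sum_sub_distrib]
  exact Finset.sum_congr rfl fun a _ => by split_ifs <;> ring

lemma dsum_fiber [Fintype A] {κ : Type} [DecidableEq κ] (g : A → κ) (lam : A → ℝ)
    (p : A → Prop) :
    dsum lam p = ∑ B ∈ Finset.univ.image g, dsum lam (fun a => p a ∧ g a = B) := by
  rw [← sum_eq_dsum lam (p := p),
    ← Finset.sum_fiberwise_of_maps_to (g := g) (t := Finset.univ.image g)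
      (fun a _ => Finset.mem_image_of_mem g (Finset.mem_univ a)) lam]
  refine Finset.sum_congr rfl fun B _ => ?_
  rw [Finset.filter_filter]
  exact sum_eq_dsum lam

/-- Cancellation of loops: if `p` and `q` agree on loops, the difference of their
`dsum`s only sees non-loop arrows. -/
lemma dsum_cancel_loops [Fintype A] (lam : A → ℝ) (p q : A → Prop)
    (h : ∀ a, s a = t a → (p a ↔ q a)) :
    dsum lam p - dsum lam q
      = dsum lam (fun a => p a ∧ ¬ s a = t a) - dsum lam (fun a => q a ∧ ¬ s a = t a) := by
  rw [dsum_split lam p (fun a => s a = t a), dsum_split lam q (fun a => s a = t a)]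
  have : dsum lam (fun a => p a ∧ s a = t a) = dsum lam (fun a => q a ∧ s a = t a) :=
    dsum_congr lam fun a => by
      constructor
      · rintro ⟨h1, h2⟩; exact ⟨(h a h2).mp h1, h2⟩
      · rintro ⟨h1, h2⟩; exact ⟨(h a h2).mpr h1, h2⟩
  rw [this]; ring
end DsumAux


section Backward
variable {V A : Type} {s t : A → V}
open scoped Classical

lemma conservedOn_dsum [Fintype A] (B : Set A) (lam : A → ℝ) :
    ConservedOn s t B lam ↔
      ∀ i : V, dsum lam (fun a => a ∈ B ∧ t a = i) = dsum lam (fun a => a ∈ B ∧ s a = i) := by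
  unfold ConservedOn
  refine forall_congr' fun i => ?_
  rw [sum_eq_dsum lam, sum_eq_dsum lam]

lemma conserved_dsum [Fintype A] [DecidableEq V] (lam : A → ℝ) :
    Conserved s t lam ↔
      ∀ i : V, dsum lam (fun a => t a = i) = dsum lam (fun a => s a = i) := by
  unfold Conserved
  refine forall_congr' fun i => ?_
  rw [sum_eq_dsum lam, sum_eq_dsum lam]

lemma backward [Finite A] [Fintype A] [DecidableEq V] (lam : A → ℝ)
    (h : ∀ B : Set A, IsBlockQ s t B → ConservedOn s t B lam) :
    Conserved s t lam := by
  classical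
  have hblock := fun a : A => exists_block (s := s) (t := t) a
  set bl : A → Set A := fun a => (hblock a).choose with hbl
  have hbl1 : ∀ a, IsBlockQ s t (bl a) := fun a => (hblock a).choose_spec.1
  have hbl2 : ∀ a, a ∈ bl a := fun a => (hblock a).choose_spec.2
  rw [conserved_dsum]
  intro i
  rw [← sub_eq_zero,
    dsum_cancel_loops (s := s) (t := t) lam (fun a => t a = i) (fun a => s a = i)
      (fun a hl => by simp only [hl])]
  haveI : Fintype (Set A) := Fintype.ofFinite _
  rw [dsum_fiber bl lam (fun a => t a = i ∧ ¬ s a = t a),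
      dsum_fiber bl lam (fun a => s a = i ∧ ¬ s a = t a), ← Finset.sum_sub_distrib]
  apply Finset.sum_eq_zero
  intro B hB
  rw [sub_eq_zero]
  obtain ⟨a₀, -, rfl⟩ := Finset.mem_image.mp hB
  have hBblock := hbl1 a₀
  have hmem : ∀ a, ¬ s a = t a → (bl a = bl a₀ ↔ a ∈ bl a₀) := by
    intro a hnl
    constructor
    · intro he; exact he ▸ hbl2 a
    · intro ha; exact block_unique (hbl1 a) hBblock hnl (hbl2 a) ha
  have key := (conservedOn_dsum (s := s) (t := t) (bl a₀) lam).mp (h _ hBblock) i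
  have key2 : dsum lam (fun a => (a ∈ bl a₀ ∧ t a = i) ∧ ¬ s a = t a)
      = dsum lam (fun a => (a ∈ bl a₀ ∧ s a = i) ∧ ¬ s a = t a) := by
    have h2 := dsum_cancel_loops (s := s) (t := t) lam (fun a => a ∈ bl a₀ ∧ t a = i)
      (fun a => a ∈ bl a₀ ∧ s a = i)
      (fun a hl => by simp only [hl])
    rw [key, sub_self] at h2
    linarith
  calc dsum lam (fun a => (t a = i ∧ ¬ s a = t a) ∧ bl a = bl a₀)
      = dsum lam (fun a => (a ∈ bl a₀ ∧ t a = i) ∧ ¬ s a = t a) := by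
        refine dsum_congr lam fun a => ?_
        constructor
        · rintro ⟨⟨h1, h2⟩, h3⟩; exact ⟨⟨(hmem a h2).mp h3, h1⟩, h2⟩
        · rintro ⟨⟨h3, h1⟩, h2⟩; exact ⟨⟨h1, h2⟩, (hmem a h2).mpr h3⟩
    _ = dsum lam (fun a => (a ∈ bl a₀ ∧ s a = i) ∧ ¬ s a = t a) := key2
    _ = dsum lam (fun a => (s a = i ∧ ¬ s a = t a) ∧ bl a = bl a₀) := by
        refine dsum_congr lam fun a => ?_
        constructor
        · rintro ⟨⟨h3, h1⟩, h2⟩; exact ⟨⟨h1, h2⟩, (hmem a h2).mpr h3⟩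
        · rintro ⟨⟨h1, h2⟩, h3⟩; exact ⟨⟨(hmem a h2).mp h3, h1⟩, h2⟩
end Backward

section Cycle
variable {V A : Type} {s t : A → V} {M : ℕ}
open scoped Classical
open Fin.CommRing

/-- Data of an unoriented simple cycle: arrows `α k`, signs `e k`, tails `tl k`. -/
def CycData (s : A → V) (t : A → V) (α : Fin (M+1) → A) (e : Fin (M+1) → ℝ)
    (tl : Fin (M+1) → V) : Prop :=
  ∀ k : Fin (M+1), (e k = 1 ∧ s (α k) = tl k ∧ t (α k) = tl (k+1)) ∨
    (e k = -1 ∧ s (α k) = tl (k+1) ∧ t (α k) = tl k)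

/-- The flow associated to a signed cycle. -/
noncomputable def cflow (α : Fin (M+1) → A) (e : Fin (M+1) → ℝ) : A → ℝ :=
  fun b => ∑ k, if α k = b then e k else 0

lemma dsum_cflow [Fintype A] (α : Fin (M+1) → A) (e : Fin (M+1) → ℝ) (p : A → Prop) :
    dsum (cflow α e) p = ∑ k, if p (α k) then e k else 0 := by
  unfold dsum cflow
  have h1 : ∀ a : A, (if p a then (∑ k, if α k = a then e k else 0) else 0)
      = ∑ k, if α k = a ∧ p a then e k else 0 := by
    intro a
    by_cases hp : p a
    · simp only [hp, if_true, and_true]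
    · simp [hp]
  rw [Finset.sum_congr rfl fun a _ => h1 a, Finset.sum_comm]
  refine Finset.sum_congr rfl fun k _ => ?_
  have h2 : ∀ a : A, (if α k = a ∧ p a then e k else 0)
      = if α k = a then (if p a then e k else 0) else 0 := by
    intro a; split_ifs <;> tauto
  rw [Finset.sum_congr rfl fun a _ => h2 a, Finset.sum_ite_eq]
  simp

lemma cflow_conserved [Fintype A] {α : Fin (M+1) → A} {e : Fin (M+1) → ℝ}
    {tl : Fin (M+1) → V} (hcd : CycData s t α e tl) (i : V) :
    dsum (cflow α e) (fun a => t a = i) = dsum (cflow α e) (fun a => s a = i) := by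
  rw [dsum_cflow, dsum_cflow, ← sub_eq_zero, ← Finset.sum_sub_distrib]
  have h1 : ∀ k, (if t (α k) = i then e k else 0) - (if s (α k) = i then e k else 0)
      = (if tl (k+1) = i then (1:ℝ) else 0) - (if tl k = i then 1 else 0) := by
    intro k
    rcases hcd k with ⟨h1, h2, h3⟩ | ⟨h1, h2, h3⟩ <;> rw [h1, h2, h3] <;> split_ifs <;> ring
  rw [Finset.sum_congr rfl fun k _ => h1 k, Finset.sum_sub_distrib, sub_eq_zero]
  exact Fintype.sum_equiv (Equiv.addRight (1 : Fin (M+1))) _ _ (fun k => rfl)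

lemma cflow_conservedOn_loops [Fintype A] {α : Fin (M+1) → A} {e : Fin (M+1) → ℝ}
    (B : Set A) (hloops : ∀ k, α k ∈ B → s (α k) = t (α k)) (i : V) :
    dsum (cflow α e) (fun a => a ∈ B ∧ t a = i)
      = dsum (cflow α e) (fun a => a ∈ B ∧ s a = i) := by
  rw [dsum_cflow, dsum_cflow]
  refine Finset.sum_congr rfl fun k _ => ?_
  by_cases hk : α k ∈ B
  · rw [hloops k hk]
  · simp [hk]

lemma cflow_conservedOn_subset [Fintype A] {α : Fin (M+1) → A} {e : Fin (M+1) → ℝ}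
    {tl : Fin (M+1) → V} (hcd : CycData s t α e tl)
    (B : Set A) (hsub : ∀ k, α k ∈ B) (i : V) :
    dsum (cflow α e) (fun a => a ∈ B ∧ t a = i)
      = dsum (cflow α e) (fun a => a ∈ B ∧ s a = i) := by
  have h2 := cflow_conserved hcd i
  rw [dsum_cflow, dsum_cflow] at h2
  rw [dsum_cflow, dsum_cflow]
  refine Eq.trans (Finset.sum_congr rfl fun k _ => ?_)
    (Eq.trans h2 (Finset.sum_congr rfl fun k _ => ?_)) <;>
    · have hkB := hsub k
      split_ifs with hc1 hc2 <;> tauto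

lemma cyc_verts {α : Fin (M+1) → A} {e : Fin (M+1) → ℝ} {tl : Fin (M+1) → V}
    (hcd : CycData s t α e tl) : QVerts s t (Set.range α) = Set.range tl := by
  ext v
  constructor
  · rintro ⟨a, ⟨k, rfl⟩, hv | hv⟩ <;> rcases hcd k with ⟨h1, h2, h3⟩ | ⟨h1, h2, h3⟩
    · exact ⟨k, hv ▸ h2.symm ▸ rfl⟩
    · exact ⟨k+1, by rw [← hv, h2]⟩
    · exact ⟨k+1, by rw [← hv, h3]⟩
    · exact ⟨k, by rw [← hv, h3]⟩
  · rintro ⟨k, rfl⟩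
    rcases hcd k with ⟨h1, h2, h3⟩ | ⟨h1, h2, h3⟩
    · exact ⟨α k, ⟨k, rfl⟩, Or.inl h2⟩
    · exact ⟨α k, ⟨k, rfl⟩, Or.inr h3⟩

lemma cyc_step {α : Fin (M+1) → A} {e : Fin (M+1) → ℝ} {tl : Fin (M+1) → V}
    (hcd : CycData s t α e tl) {X : Set V} {k : Fin (M+1)}
    (h1 : tl k ∉ X) (h2 : tl (k+1) ∉ X) :
    AvoidStep s t (Set.range α) X (tl k) (tl (k+1)) := by
  rcases hcd k with ⟨-, h2', h3'⟩ | ⟨-, h2', h3'⟩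
  · exact ⟨h1, h2, α k, ⟨k, rfl⟩, Or.inl ⟨h2', h3'⟩⟩
  · exact ⟨h1, h2, α k, ⟨k, rfl⟩, Or.inr ⟨h2', h3'⟩⟩

lemma cyc_path {α : Fin (M+1) → A} {e : Fin (M+1) → ℝ} {tl : Fin (M+1) → V}
    (hcd : CycData s t α e tl) (X : Set V) (p : Fin (M+1)) (n : ℕ)
    (h : ∀ m : ℕ, m ≤ n → tl (p + (m : Fin (M+1))) ∉ X) :
    Relation.ReflTransGen (AvoidStep s t (Set.range α) X) (tl p) (tl (p + (n : Fin (M+1)))) := by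
  induction n with
  | zero => simp only [Nat.cast_zero, add_zero]; exact Relation.ReflTransGen.refl
  | succ n ih =>
    have hcast : ((n+1 : ℕ) : Fin (M+1)) = (n : Fin (M+1)) + 1 := by push_cast; ring
    rw [hcast, ← add_assoc]
    exact (ih (fun m hm => h m (hm.trans (Nat.le_succ n)))).tail
      (cyc_step hcd (h n (Nat.le_succ n))
        (by rw [add_assoc, ← hcast]; exact h (n+1) le_rfl))

lemma val_neg_aux {x : Fin (M+1)} (hx : x ≠ 0) : (-x).val = M + 1 - x.val := by
  have h0 : (-x + x) = 0 := by ring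
  have hval := congrArg Fin.val h0
  rw [Fin.val_add] at hval
  have h1 : (-x).val < M + 1 := (-x).isLt
  have h2 : x.val < M + 1 := x.isLt
  have h3 : x.val ≠ 0 := fun h => hx (Fin.ext h)
  have hz : (0 : Fin (M+1)).val = 0 := rfl
  rw [hz] at hval
  rcases Nat.lt_or_ge ((-x).val + x.val) (M+1) with hlt | hge
  · rw [Nat.mod_eq_of_lt hlt] at hval; omega
  · rw [Nat.mod_eq_sub_mod hge, Nat.mod_eq_of_lt (by omega)] at hval; omega

lemma cyc_biconn {α : Fin (M+1) → A} {e : Fin (M+1) → ℝ} {tl : Fin (M+1) → V}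
    (hcd : CycData s t α e tl) (hinj : Function.Injective tl) :
    IsBiconnQ s t (Set.range α) := by
  refine ⟨⟨α 0, 0, rfl⟩, ?_⟩
  intro X hX i hi j hj
  obtain ⟨hiv, hiX⟩ := hi
  obtain ⟨hjv, hjX⟩ := hj
  rw [cyc_verts hcd] at hiv hjv
  obtain ⟨p, rfl⟩ := hiv
  obtain ⟨q, rfl⟩ := hjv
  by_cases hpq : p = q
  · rw [hpq]
  set d : Fin (M+1) := q - p with hd
  have hpd : p + d = q := by rw [hd]; ring
  have hdne : d ≠ 0 := by
    intro h0; rw [h0, add_zero] at hpd; exact hpq hpd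
  by_cases hgood : ∀ m : ℕ, m ≤ d.val → tl (p + (m : Fin (M+1))) ∉ X
  · have hp := cyc_path hcd X p d.val hgood
    rwa [Fin.cast_val_eq_self, hpd] at hp
  · push_neg at hgood
    obtain ⟨m₀, hm₀le, hm₀X⟩ := hgood
    have hm₀lt : m₀ < M + 1 := lt_of_le_of_lt hm₀le d.isLt
    have hm₀0 : m₀ ≠ 0 := by
      intro h0; rw [h0, Nat.cast_zero, add_zero] at hm₀X; exact hiX hm₀X
    have hm₀d : m₀ ≠ d.val := by
      intro h0
      rw [h0, Fin.cast_val_eq_self, hpd] at hm₀X; exact hjX hm₀X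
    have hnegval : (p - q : Fin (M+1)).val = M + 1 - d.val := by
      have : p - q = -d := by rw [hd]; ring
      rw [this, val_neg_aux hdne]
    have hpath : ∀ m : ℕ, m ≤ (p - q : Fin (M+1)).val → tl (q + (m : Fin (M+1))) ∉ X := by
      intro m hm hmX
      rw [hnegval] at hm
      have hmlt : m < M + 1 := by omega
      have heq : tl (q + (m : Fin (M+1))) = tl (p + (m₀ : Fin (M+1))) := hX hmX hm₀X
      have heq2 : q + (m : Fin (M+1)) = p + (m₀ : Fin (M+1)) := hinj heq
      rw [← hpd, add_assoc] at heq2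
      have h3 : d + (m : Fin (M+1)) = (m₀ : Fin (M+1)) := add_left_cancel heq2
      have hval := congrArg Fin.val h3
      rw [Fin.val_add, Fin.val_cast_of_lt hmlt, Fin.val_cast_of_lt hm₀lt] at hval
      have hd1 : d.val ≠ 0 := fun h => hdne (Fin.ext h)
      have : d.val + m ≤ M + 1 := by omega
      rcases Nat.lt_or_ge (d.val + m) (M+1) with hlt | hge
      · rw [Nat.mod_eq_of_lt hlt] at hval; omega
      · have hsum : d.val + m = M + 1 := le_antisymm this hge
        rw [hsum, Nat.mod_self] at hval; omega
    have hp := cyc_path hcd X q (p - q : Fin (M+1)).val hpath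
    rw [Fin.cast_val_eq_self] at hp
    have : q + (p - q) = p := by ring
    rw [this] at hp
    haveI : Std.Symm (AvoidStep s t (Set.range α) X) := ⟨fun _ _ h => avoidStep_symm h⟩
    exact Std.Symm.symm _ _ hp
end Cycle

section Forward
variable {V A : Type} {s t : A → V} {M : ℕ}
open scoped Classical

lemma cflow_conservedOn_block [Fintype A] {α : Fin (M+1) → A} {e : Fin (M+1) → ℝ}
    {tl : Fin (M+1) → V} (hcd : CycData s t α e tl) (hinj : Function.Injective tl)
    {B : Set A} (hB : IsBlockQ s t B) (i : V) :
    dsum (cflow α e) (fun a => a ∈ B ∧ t a = i)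
      = dsum (cflow α e) (fun a => a ∈ B ∧ s a = i) := by
  by_cases hcase : ∀ k, α k ∈ B → s (α k) = t (α k)
  · exact cflow_conservedOn_loops B hcase i
  · push_neg at hcase
    obtain ⟨k₀, hk₀B, hk₀nl⟩ := hcase
    have hbic := cyc_biconn hcd hinj
    have hunion := biconn_union hbic hB.1 hk₀nl (mem_qverts_s ⟨k₀, rfl⟩) (mem_qverts_s hk₀B)
      (mem_qverts_t ⟨k₀, rfl⟩) (mem_qverts_t hk₀B)
    have hBeq := hB.2 _ hunion Set.subset_union_right
    have hsub : ∀ k, α k ∈ B := fun k => hBeq ▸ (Set.mem_union_left B ⟨k, rfl⟩)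
    exact cflow_conservedOn_subset hcd B hsub i

lemma key_step [Fintype A] [DecidableEq V] {lam : A → ℝ} (hc : Conserved s t lam) {i : V}
    (hin : ∃ a, (0 < lam a ∧ t a = i) ∨ (lam a < 0 ∧ s a = i)) :
    ∃ a, (0 < lam a ∧ s a = i) ∨ (lam a < 0 ∧ t a = i) := by
  by_contra hno
  obtain ⟨a₀, ha₀⟩ := hin
  have hcons := hc i
  have hs_nonpos : ∀ a, s a = i → lam a ≤ 0 := by
    intro a ha
    by_contra h
    exact hno ⟨a, Or.inl ⟨not_le.mp h, ha⟩⟩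
  have ht_nonneg : ∀ a, t a = i → 0 ≤ lam a := by
    intro a ha
    by_contra h
    exact hno ⟨a, Or.inr ⟨not_le.mp h, ha⟩⟩
  rcases ha₀ with ⟨hpos, hta⟩ | ⟨hneg, hsa⟩
  · have h1 : 0 < ∑ a ∈ Finset.univ.filter (fun a => t a = i), lam a :=
      Finset.sum_pos' (fun a ha => ht_nonneg a (Finset.mem_filter.mp ha).2)
        ⟨a₀, Finset.mem_filter.mpr ⟨Finset.mem_univ _, hta⟩, hpos⟩
    have h2 : ∑ a ∈ Finset.univ.filter (fun a => s a = i), lam a ≤ 0 :=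
      Finset.sum_nonpos (fun a ha => hs_nonpos a (Finset.mem_filter.mp ha).2)
    rw [hcons] at h1
    linarith
  · have h1 : 0 < ∑ a ∈ Finset.univ.filter (fun a => s a = i), (fun a => -lam a) a :=
      Finset.sum_pos' (fun a ha => by simp only [neg_nonneg]; exact hs_nonpos a (Finset.mem_filter.mp ha).2)
        ⟨a₀, Finset.mem_filter.mpr ⟨Finset.mem_univ _, hsa⟩, by simp only [neg_pos]; exact hneg⟩
    rw [Finset.sum_neg_distrib] at h1
    have h2 : 0 ≤ ∑ a ∈ Finset.univ.filter (fun a => t a = i), lam a :=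
      Finset.sum_nonneg (fun a ha => ht_nonneg a (Finset.mem_filter.mp ha).2)
    rw [hcons] at h2
    linarith

lemma exists_cycle [Fintype V] [Fintype A] [DecidableEq V] {lam : A → ℝ}
    (hc : Conserved s t lam) {a₀ : A} (h0 : lam a₀ ≠ 0) :
    ∃ (M : ℕ) (α : Fin (M+1) → A) (e : Fin (M+1) → ℝ) (tl : Fin (M+1) → V),
      CycData s t α e tl ∧ Function.Injective tl ∧
      (∀ k, e k = if 0 < lam (α k) then 1 else -1) ∧ (∀ k, lam (α k) ≠ 0) := by
  classical
  set P : V → Prop := fun i => ∃ a, (0 < lam a ∧ s a = i) ∨ (lam a < 0 ∧ t a = i) with hP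
  have hkey : ∀ i : V, (∃ a, (0 < lam a ∧ t a = i) ∨ (lam a < 0 ∧ s a = i)) → P i :=
    fun i h => key_step hc h
  set ch : V → A := fun i => if h : P i then h.choose else a₀ with hch
  have hchspec : ∀ i, P i → (0 < lam (ch i) ∧ s (ch i) = i) ∨ (lam (ch i) < 0 ∧ t (ch i) = i) := by
    intro i h
    simp only [hch, dif_pos h]
    exact h.choose_spec
  set nx : V → V := fun i => if 0 < lam (ch i) then t (ch i) else s (ch i) with hnx
  have hnxP : ∀ i, P i → P (nx i) := by
    intro i h
    rcases hchspec i h with ⟨hpos, hsi⟩ | ⟨hneg, hti⟩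
    · refine hkey _ ⟨ch i, Or.inl ⟨hpos, ?_⟩⟩
      simp only [hnx, if_pos hpos]
    · refine hkey _ ⟨ch i, Or.inr ⟨hneg, ?_⟩⟩
      simp only [hnx, if_neg (not_lt.mpr hneg.le)]
  set i₁ : V := if 0 < lam a₀ then t a₀ else s a₀ with hi₁
  have hPi₁ : P i₁ := by
    rcases lt_or_gt_of_ne h0 with hneg | hpos
    · refine hkey _ ⟨a₀, Or.inr ⟨hneg, ?_⟩⟩
      simp only [hi₁, if_neg (not_lt.mpr hneg.le)]
    · refine hkey _ ⟨a₀, Or.inl ⟨hpos, ?_⟩⟩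
      simp only [hi₁, if_pos hpos]
  set v : ℕ → V := fun n => nx^[n] i₁ with hv
  have hvsucc : ∀ n, v (n+1) = nx (v n) := by
    intro n
    simp only [hv, Function.iterate_succ_apply']
  have hvP : ∀ n, P (v n) := by
    intro n
    induction n with
    | zero => exact hPi₁
    | succ n ih => rw [hvsucc]; exact hnxP _ ih
  have hrep : ∃ d, 0 < d ∧ ∃ K, v (K + d) = v K := by
    obtain ⟨m, n, hmn, hvmn⟩ := Finite.exists_ne_map_eq_of_infinite v
    rcases Nat.lt_or_ge m n with h | h
    · exact ⟨n - m, by omega, m, by rw [show m + (n - m) = n by omega]; exact hvmn.symm⟩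
    · have h' : n < m := by omega
      exact ⟨m - n, by omega, n, by rw [show n + (m - n) = m by omega]; exact hvmn⟩
  set d₀ := Nat.find hrep with hd₀
  obtain ⟨hd₀pos, K, hK⟩ := Nat.find_spec hrep
  have hwin : ∀ i j : ℕ, i < d₀ → j < d₀ → v (K + i) = v (K + j) → i = j := by
    intro i j hi hj hij
    by_contra hne
    rcases Nat.lt_or_ge i j with h | h
    · exact (Nat.find_min hrep (show j - i < d₀ by omega))
        ⟨by omega, K + i, by rw [show K + i + (j - i) = K + j by omega]; exact hij.symm⟩
    · have h' : j < i := by omega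
      exact (Nat.find_min hrep (show i - j < d₀ by omega))
        ⟨by omega, K + j, by rw [show K + j + (i - j) = K + i by omega]; exact hij⟩
  obtain ⟨M, hM⟩ : ∃ M, d₀ = M + 1 := ⟨d₀ - 1, by omega⟩
  refine ⟨M, fun k => ch (v (K + k.val)), fun k => if 0 < lam (ch (v (K + k.val))) then 1 else -1,
    fun k => v (K + k.val), ?_, ?_, fun k => rfl, ?_⟩
  · intro k
    have hPk := hvP (K + k.val)
    have hnext : v (K + (k+1).val) = nx (v (K + k.val)) := by
      by_cases hk : k.val < M
      · have h1 : (k+1).val = k.val + 1 :=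
          Fin.val_add_one_of_lt (by rw [Fin.lt_iff_val_lt_val, Fin.val_last]; exact hk)
        rw [h1, show K + (k.val + 1) = (K + k.val) + 1 by ring, hvsucc]
      · have hkM : k.val = M := by have := k.isLt; omega
        have h1 : k + 1 = 0 := by
          rw [show k = Fin.last M from Fin.ext hkM, Fin.last_add_one]
        rw [h1]
        calc v (K + (0 : Fin (M+1)).val) = v K := by rw [Fin.val_zero, Nat.add_zero]
          _ = v (K + d₀) := hK.symm
          _ = v ((K + M) + 1) := by rw [hM, show K + (M + 1) = (K + M) + 1 by ring]
          _ = nx (v (K + M)) := hvsucc _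
          _ = nx (v (K + k.val)) := by rw [hkM]
    rcases hchspec _ hPk with ⟨hpos, hsi⟩ | ⟨hneg, hti⟩
    · refine Or.inl ⟨if_pos hpos, hsi, ?_⟩
      show t (ch (v (K + k.val))) = v (K + (k+1).val)
      rw [hnext]
      simp only [hnx, if_pos hpos]
    · refine Or.inr ⟨if_neg (not_lt.mpr hneg.le), ?_, hti⟩
      show s (ch (v (K + k.val))) = v (K + (k+1).val)
      rw [hnext]
      simp only [hnx, if_neg (not_lt.mpr hneg.le)]
  · intro k k' h
    have h1 := k.isLt
    have h2 := k'.isLt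
    exact Fin.ext (hwin k.val k'.val (by omega) (by omega) h)
  · intro k
    rcases hchspec _ (hvP (K + k.val)) with ⟨hpos, -⟩ | ⟨hneg, -⟩
    · exact ne_of_gt hpos
    · exact ne_of_lt hneg

lemma forward [Fintype V] [Fintype A] [DecidableEq V] :
    ∀ (n : ℕ) (lam : A → ℝ), (Finset.univ.filter (fun a => lam a ≠ 0)).card = n →
      Conserved s t lam → ∀ B : Set A, IsBlockQ s t B → ConservedOn s t B lam := by
  intro n
  induction n using Nat.strong_induction_on with
  | _ n ih =>
    intro lam hcard hc B hB
    rw [conservedOn_dsum]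
    intro i
    by_cases hzero : ∀ a : A, lam a = 0
    · have hz : ∀ p : A → Prop, dsum lam p = 0 := fun p =>
        Finset.sum_eq_zero fun a _ => by simp [hzero a]
      rw [hz, hz]
    · push_neg at hzero
      obtain ⟨a₀, h0⟩ := hzero
      obtain ⟨M, α, e, tl, hcd, hinj, hedef, hne⟩ := exists_cycle hc h0
      set f := cflow α e with hf
      have hf0 : f (α 0) ≠ 0 := by
        have h1 : f (α 0) = (if 0 < lam (α 0) then (1:ℝ) else -1)
            * ∑ k, if α k = α 0 then (1:ℝ) else 0 := by
          rw [hf]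
          unfold cflow
          rw [Finset.mul_sum]
          refine Finset.sum_congr rfl fun k _ => ?_
          by_cases hk : α k = α 0
          · rw [if_pos hk, if_pos hk, hedef k, hk, mul_one]
          · rw [if_neg hk, if_neg hk, mul_zero]
        have h2 : 0 < ∑ k, if α k = α 0 then (1:ℝ) else 0 :=
          Finset.sum_pos' (fun k _ => by split_ifs <;> norm_num)
            ⟨0, Finset.mem_univ _, by rw [if_pos rfl]; norm_num⟩
        rw [h1]
        refine mul_ne_zero ?_ (ne_of_gt h2)
        split_ifs <;> norm_num
      set c := lam (α 0) / f (α 0) with hcdef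
      set lam' : A → ℝ := fun a => lam a - c * f a with hlam'
      have hflam : ∀ a, lam a = 0 → f a = 0 := by
        intro a ha
        rw [hf]
        unfold cflow
        apply Finset.sum_eq_zero
        intro k _
        rw [if_neg]
        intro hk
        exact hne k (hk ▸ ha)
      have hsupp : ∀ a, lam' a ≠ 0 → lam a ≠ 0 := by
        intro a h ha
        apply h
        simp only [hlam']
        rw [ha, hflam a ha]
        ring
      have hzero0 : lam' (α 0) = 0 := by
        simp only [hlam', hcdef]
        field_simp
        ring
      have hss : Finset.univ.filter (fun a => lam' a ≠ 0)
          ⊂ Finset.univ.filter (fun a => lam a ≠ 0) := by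
        refine (Finset.ssubset_iff_of_subset (fun a ha => Finset.mem_filter.mpr
          ⟨Finset.mem_univ _, hsupp a (Finset.mem_filter.mp ha).2⟩)).mpr ?_
        exact ⟨α 0, Finset.mem_filter.mpr ⟨Finset.mem_univ _, hne 0⟩,
          fun hmem => (Finset.mem_filter.mp hmem).2 hzero0⟩
      have hcardlt : (Finset.univ.filter (fun a => lam' a ≠ 0)).card < n :=
        hcard ▸ Finset.card_lt_card hss
      have hc' : Conserved s t lam' := by
        rw [conserved_dsum]
        intro j
        have hL := (conserved_dsum (s := s) (t := t) lam).mp hc j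
        have hF := cflow_conserved hcd j
        simp only [hlam']
        rw [dsum_sub_linear, dsum_sub_linear, hL, hf, hF]
      have hOn' := ih _ hcardlt lam' rfl hc' B hB
      rw [conservedOn_dsum] at hOn'
      have hOnf : ∀ j, dsum f (fun a => a ∈ B ∧ t a = j) = dsum f (fun a => a ∈ B ∧ s a = j) :=
        fun j => by rw [hf]; exact cflow_conservedOn_block hcd hinj hB j
      have hlin : ∀ p : A → Prop, dsum lam p = dsum lam' p + c * dsum f p := by
        intro p
        have h1 : dsum lam' p = dsum lam p - c * dsum f p := by
          simp only [hlam']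
          exact dsum_sub_linear lam f c p
        linarith
      rw [hlin, hlin, hOn' i, hOnf i]
end Forward

/-- A current on a connected quiver is conserved iff its restriction to each
biconnected component is conserved. -/
theorem stmt7 {V A : Type} [Fintype V] [Fintype A] [DecidableEq V] [DecidableEq A]
    (s t : A → V)
    (hconn : ∀ i j : V, Relation.ReflTransGen (UStep s t) i j)
    (lam : A → ℝ) :
    Conserved s t lam ↔ ∀ B : Set A, IsBlockQ s t B → ConservedOn s t B lam := by
  constructor
  · intro hc B hB
    exact forward (s := s) (t := t) _ lam rfl hc B hB
  · exact backward lam
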